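/- Let $X$ be a Banach space with a $1$-unconditional basis $(e_i)$, and suppose there exist $1 < p \le q < \infty$ and $\theta > 0$ such that every normalized block sequence $(y_j)$ of $(e_i)$ satisfies $\theta\|(\lambda_j)\|_{\ell_q} \le \|\sum_j \lambda_j y_j\| \le 2\|(\lambda_j)\|_{\ell_p}$ for all finitely supported scalars. Then neither $c_0$ nor $\ell_1$ embeds isomorphically into $X$. -/

import Mathlib

open ENNReal ZeroAtInfty

open Filter Topology

section Coords

variable {X : Type*} [NormedAddCommGroup X] [NormedSpace ℝ X] [CompleteSpace X]

lemma exists_coords (e : ℕ → X) (he : ∀ i, ‖e i‖ = 1)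
    (hspan : Submodule.topologicalClosure (Submodule.span ℝ (Set.range e)) = ⊤)
    (huncond : ∀ (s : Finset ℕ) (lam eps : ℕ → ℝ), (∀ i, |eps i| ≤ 1) →
      ‖∑ i ∈ s, (eps i * lam i) • e i‖ ≤ ‖∑ i ∈ s, lam i • e i‖) :
    ∃ f : ℕ → (X →L[ℝ] ℝ),
      (∀ i x, |f i x| ≤ ‖x‖) ∧
      (∀ (s : Finset ℕ) (x : X), ‖∑ i ∈ s, f i x • e i‖ ≤ ‖x‖) ∧
      (∀ x : X, Tendsto (fun n => ∑ i ∈ Finset.range n, f i x • e i) atTop (𝓝 x)) := by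
  -- key estimate from unconditionality
  have hkey : ∀ (s : Finset ℕ) (lam : ℕ → ℝ) (t : Finset ℕ),
      ‖∑ i ∈ s ∩ t, lam i • e i‖ ≤ ‖∑ i ∈ s, lam i • e i‖ := by
    intro s lam t
    have := huncond s lam (fun i => if i ∈ t then 1 else 0) (by
      intro i; by_cases h : i ∈ t <;> simp [h])
    have heq : ∑ i ∈ s, ((if i ∈ t then (1:ℝ) else 0) * lam i) • e i
        = ∑ i ∈ s ∩ t, lam i • e i := by
      rw [← Finset.filter_mem_eq_inter, Finset.sum_filter]
      refine Finset.sum_congr rfl fun i _ => ?_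
      by_cases h : i ∈ t <;> simp [h]
    calc ‖∑ i ∈ s ∩ t, lam i • e i‖
        = ‖∑ i ∈ s, ((if i ∈ t then (1:ℝ) else 0) * lam i) • e i‖ := by rw [heq]
      _ ≤ _ := this
  -- single coordinate estimate on finite combinations
  have hone : ∀ (s : Finset ℕ) (lam : ℕ → ℝ) (i : ℕ), i ∈ s →
      |lam i| ≤ ‖∑ j ∈ s, lam j • e j‖ := by
    intro s lam i hi
    have := hkey s lam {i}
    have hs : s ∩ {i} = {i} := by
      ext j; simp (config := {contextual := true}) [Finset.mem_inter]
      rintro rfl; exact hi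
    rw [hs] at this
    simpa [norm_smul, he i] using this
  -- linear independence
  have hli : LinearIndependent ℝ e := by
    rw [linearIndependent_iff']
    intro s g hg i hi
    have h2 := hone s g i hi
    rw [hg] at h2
    simp only [norm_zero] at h2
    exact abs_eq_zero.mp (le_antisymm h2 (abs_nonneg _))
  set V := Submodule.span ℝ (Set.range e) with hV
  have hrep : ∀ v : V, (v : X) = ∑ i ∈ (hli.repr v).support, (hli.repr v) i • e i := by
    intro v
    conv_lhs => rw [← hli.linearCombination_repr v]
    rw [Finsupp.linearCombination_apply, Finsupp.sum]
  have hbound : ∀ (v : V) (i : ℕ), |hli.repr v i| ≤ ‖(v : X)‖ := by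
    intro v i
    by_cases hi : i ∈ (hli.repr v).support
    · calc |hli.repr v i| ≤ ‖∑ j ∈ (hli.repr v).support, (hli.repr v) j • e j‖ :=
            hone _ _ i hi
        _ = ‖(v : X)‖ := by rw [← hrep]
    · simp [Finsupp.notMem_support_iff.mp hi]
  let g : ℕ → (V →L[ℝ] ℝ) := fun i =>
    LinearMap.mkContinuous ((Finsupp.lapply i).comp hli.repr) 1
      (fun v => by simpa using hbound v i)
  have hdense : DenseRange (V.subtypeL) := by
    have : Dense (V : Set X) := Submodule.dense_iff_topologicalClosure_eq_top.mpr hspan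
    simpa [DenseRange, Subtype.range_coe] using this
  have huni : IsUniformInducing (V.subtypeL : V →L[ℝ] X) :=
    (isometry_subtype_coe).isUniformInducing
  let f : ℕ → (X →L[ℝ] ℝ) := fun i => (g i).extend V.subtypeL
  have hfg : ∀ (i : ℕ) (v : V), f i (v : X) = hli.repr v i := fun i v =>
    ContinuousLinearMap.extend_eq _ hdense huni v
  have hdenseV : Dense (V : Set X) := Submodule.dense_iff_topologicalClosure_eq_top.mpr hspan
  have hA : ∀ (i : ℕ) (x : X), |f i x| ≤ ‖x‖ := by
    intro i x
    have hcl : IsClosed {x : X | |f i x| ≤ ‖x‖} :=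
      isClosed_le ((f i).continuous.abs) continuous_norm
    have hsub : (V : Set X) ⊆ {x : X | |f i x| ≤ ‖x‖} := by
      rintro v hv
      have := hbound ⟨v, hv⟩ i
      simpa [hfg i ⟨v, hv⟩] using this
    have := hcl.closure_subset_iff.mpr hsub
    exact this (by rw [hdenseV.closure_eq]; trivial)
  have hPle : ∀ (s : Finset ℕ) (x : X), ‖∑ i ∈ s, f i x • e i‖ ≤ ‖x‖ := by
    intro s x
    have hcl : IsClosed {x : X | ‖∑ i ∈ s, f i x • e i‖ ≤ ‖x‖} := by
      apply isClosed_le _ continuous_norm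
      exact (continuous_finset_sum s fun i _ => ((f i).continuous).smul continuous_const).norm
    have hsub : (V : Set X) ⊆ {x : X | ‖∑ i ∈ s, f i x • e i‖ ≤ ‖x‖} := by
      rintro x hx
      set v : V := ⟨x, hx⟩ with hv
      set c : ℕ →₀ ℝ := hli.repr v with hc
      have h1 : ∑ i ∈ s, f i x • e i = ∑ i ∈ s ∩ c.support, c i • e i := by
        rw [← Finset.sum_subset Finset.inter_subset_left (fun i hi hni => ?_)]
        · refine Finset.sum_congr rfl fun i _ => ?_
          have : f i x = c i := hfg i v
          rw [this]
        · have : c i = 0 := by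
            by_contra h
            exact hni (Finset.mem_inter.mpr ⟨hi, Finsupp.mem_support_iff.mpr h⟩)
          have hfi : f i x = c i := hfg i v
          simp [hfi, this]
      show ‖∑ i ∈ s, f i x • e i‖ ≤ ‖x‖
      rw [h1, Finset.inter_comm]
      calc ‖∑ i ∈ c.support ∩ s, c i • e i‖ ≤ ‖∑ i ∈ c.support, c i • e i‖ := hkey _ _ _
        _ = ‖x‖ := by rw [← hrep v]
    have := hcl.closure_subset_iff.mpr hsub
    exact this (by rw [hdenseV.closure_eq]; trivial)
  refine ⟨f, hA, hPle, ?_⟩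
  intro x
  rw [Metric.tendsto_atTop]
  intro ε hε
  obtain ⟨y, hy, hxy⟩ := hdenseV.exists_dist_lt x (by positivity : (0:ℝ) < ε / 2)
  set v : V := ⟨y, hy⟩ with hvdef
  set c : ℕ →₀ ℝ := hli.repr v with hc
  refine ⟨c.support.sup id + 1, fun n hn => ?_⟩
  have hsupp : c.support ⊆ Finset.range n := by
    intro i hi
    have := Finset.le_sup (f := id) hi
    simp only [id] at this
    exact Finset.mem_range.mpr (by omega)
  have hPv : ∑ i ∈ Finset.range n, f i y • e i = y := by
    calc ∑ i ∈ Finset.range n, f i y • e i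
        = ∑ i ∈ c.support, f i y • e i := by
          refine (Finset.sum_subset hsupp fun i _ hni => ?_).symm
          have : c i = 0 := Finsupp.notMem_support_iff.mp hni
          have hfi : f i y = c i := hfg i v
          simp [hfi, this]
      _ = ∑ i ∈ c.support, c i • e i := Finset.sum_congr rfl fun i _ => by rw [hfg i v]
      _ = y := (hrep v).symm
  have hlin : ∑ i ∈ Finset.range n, f i x • e i - ∑ i ∈ Finset.range n, f i y • e i
      = ∑ i ∈ Finset.range n, f i (x - y) • e i := by
    rw [← Finset.sum_sub_distrib]
    exact Finset.sum_congr rfl fun i _ => by rw [map_sub, sub_smul]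
  rw [dist_eq_norm]
  have hd : dist x y = ‖x - y‖ := dist_eq_norm x y
  calc ‖∑ i ∈ Finset.range n, f i x • e i - x‖
      ≤ ‖∑ i ∈ Finset.range n, f i x • e i - y‖ + ‖y - x‖ := norm_sub_le_norm_sub_add_norm_sub _ _ _
    _ ≤ ‖x - y‖ + ‖y - x‖ := by
        have := hPle (Finset.range n) (x - y)
        rw [← hlin, hPv] at this
        linarith [this]
    _ < ε := by
        rw [norm_sub_rev y x]
        rw [hd] at hxy
        linarith

end Coords

/-- `y` is a (finite) block sequence of the sequence `x`: each `y j` is a finite linear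
combination of the `x i` over successive finite sets of indices. -/
def IsBlockSeq {X : Type*} [NormedAddCommGroup X] [NormedSpace ℝ X]
    (x : ℕ → X) {N : ℕ} (y : Fin N → X) : Prop :=
  ∃ (a : ℕ → ℝ) (F : Fin N → Finset ℕ),
    (∀ j k : Fin N, j < k → ∀ i ∈ F j, ∀ i' ∈ F k, i < i') ∧
    ∀ j, y j = ∑ i ∈ F j, a i • x i

instance : Fact ((1 : ℝ≥0∞) ≤ 1) := ⟨le_rfl⟩

section Blocks

variable {X : Type*} [NormedAddCommGroup X] [NormedSpace ℝ X]

lemma IsBlockSeq.smul {e : ℕ → X} {N : ℕ} {w : Fin N → X} (hw : IsBlockSeq e w)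
    (t : Fin N → ℝ) : IsBlockSeq e (fun j => t j • w j) := by
  obtain ⟨a, F, hord, hrep⟩ := hw
  classical
  refine ⟨fun i => if h : ∃ j, i ∈ F j then t h.choose * a i else 0, F, hord, fun j => ?_⟩
  show t j • w j = _
  rw [hrep j, Finset.smul_sum]
  refine Finset.sum_congr rfl fun i hi => ?_
  have h : ∃ j', i ∈ F j' := ⟨j, hi⟩
  show t j • a i • e i = (if h : ∃ j, i ∈ F j then t h.choose * a i else 0) • e i
  rw [dif_pos h]
  have hj : h.choose = j := by
    by_contra hne
    rcases lt_or_gt_of_ne hne with hlt | hlt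
    · exact lt_irrefl i (hord _ _ hlt i h.choose_spec i hi)
    · exact lt_irrefl i (hord _ _ hlt i hi i h.choose_spec)
  rw [hj, smul_smul]

end Blocks

section Selection

variable {X : Type*} [NormedAddCommGroup X] [NormedSpace ℝ X]

/-- gliding hump selection: any sequence whose basis coordinates tend to `0` admits,
for each `N` and `ε`, `N` terms each `ε`-close to members of a block sequence. -/
lemma exists_block_approx (e : ℕ → X) (f : ℕ → (X →L[ℝ] ℝ))
    (hconv : ∀ x : X, Filter.Tendsto (fun n => ∑ i ∈ Finset.range n, f i x • e i)
      Filter.atTop (𝓝 x))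
    (u : ℕ → X)
    (hcoord : ∀ i : ℕ, Filter.Tendsto (fun k => f i (u k)) Filter.atTop (𝓝 0))
    (N : ℕ) (ε : ℝ) (hε : 0 < ε) :
    ∃ (k : Fin N → ℕ) (w : Fin N → X),
      (∀ j j' : Fin N, j < j' → k j < k j') ∧ IsBlockSeq e w ∧
      ∀ j, ‖w j - u (k j)‖ ≤ ε := by
  classical
  set P : ℕ → X → X := fun n x => ∑ i ∈ Finset.range n, f i x • e i with hPdef
  have key1 : ∀ n K : ℕ, ∃ k, K ≤ k ∧ ‖P n (u k)‖ < ε / 2 := by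
    intro n K
    have ht : Filter.Tendsto (fun k => P n (u k)) Filter.atTop (𝓝 0) := by
      have : Filter.Tendsto (fun k => ∑ i ∈ Finset.range n, f i (u k) • e i)
          Filter.atTop (𝓝 (∑ i ∈ Finset.range n, (0:ℝ) • e i)) := by
        refine tendsto_finset_sum _ fun i _ => ?_
        exact ((hcoord i).smul_const (e i))
      simpa using this
    have h1 : ∀ᶠ k in Filter.atTop, ‖P n (u k)‖ < ε / 2 := by
      have := ht.norm
      simp only [norm_zero] at this
      exact this.eventually_lt_const (by positivity)
    obtain ⟨k, hk1, hk2⟩ := (h1.and (Filter.eventually_ge_atTop K)).exists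
    exact ⟨k, hk2, hk1⟩
  have key2 : ∀ k n₀ : ℕ, ∃ n, n₀ < n ∧ ‖P n (u k) - u k‖ < ε / 2 := by
    intro k n₀
    have h1 : ∀ᶠ n in Filter.atTop, ‖P n (u k) - u k‖ < ε / 2 := by
      have := (hconv (u k)).sub_const (u k)
      simp only [sub_self] at this
      have := this.norm
      simp only [norm_zero] at this
      exact this.eventually_lt_const (by positivity)
    obtain ⟨n, hn1, hn2⟩ := (h1.and (Filter.eventually_gt_atTop n₀)).exists
    exact ⟨n, hn2, hn1⟩
  -- recursive construction of (nⱼ, kⱼ)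
  let step : ℕ × ℕ → ℕ × ℕ := fun s =>
    ⟨(key2 s.2 s.1).choose, (key1 (key2 s.2 s.1).choose (s.2 + 1)).choose⟩
  let s : ℕ → ℕ × ℕ := fun j => Nat.rec (⟨0, (key1 0 0).choose⟩ : ℕ × ℕ) (fun _ prev => step prev) j
  have hs0 : s 0 = ⟨0, (key1 0 0).choose⟩ := rfl
  have hss : ∀ j, s (j + 1) = step (s j) := fun j => rfl
  have hn_lt : ∀ j, (s j).1 < (s (j+1)).1 := by
    intro j; rw [hss j]; exact (key2 (s j).2 (s j).1).choose_spec.1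
  have hk_lt : ∀ j, (s j).2 < (s (j+1)).2 := by
    intro j; rw [hss j]
    show (s j).2 < (key1 (key2 (s j).2 (s j).1).choose ((s j).2 + 1)).choose
    have := (key1 (key2 (s j).2 (s j).1).choose ((s j).2 + 1)).choose_spec.1
    omega
  have hnmono : StrictMono (fun j => (s j).1) := strictMono_nat_of_lt_succ hn_lt
  have hkmono : StrictMono (fun j => (s j).2) := strictMono_nat_of_lt_succ hk_lt
  have hsmall : ∀ j, ‖P (s j).1 (u ((s j).2))‖ < ε / 2 := by
    intro j
    cases j with
    | zero =>
      have h0 : P (s 0).1 (u ((s 0).2)) = 0 := by rw [hs0]; simp [hPdef]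
      rw [h0, norm_zero]; positivity
    | succ j =>
      rw [hss j]
      exact (key1 (key2 (s j).2 (s j).1).choose ((s j).2 + 1)).choose_spec.2
  have hclose : ∀ j, ‖P (s (j+1)).1 (u ((s j).2)) - u ((s j).2)‖ < ε / 2 := by
    intro j
    have h2 := (key2 (s j).2 (s j).1).choose_spec.2
    rw [hss j]
    exact h2
  -- the blocks
  refine ⟨fun j => (s (j : ℕ)).2,
    fun j => ∑ i ∈ Finset.Ico (s (j : ℕ)).1 (s ((j : ℕ) + 1)).1, f i (u ((s (j : ℕ)).2)) • e i,
    ?_, ?_, ?_⟩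
  · intro j j' h
    exact hkmono (by exact_mod_cast h)
  · refine ⟨fun i => if h : ∃ j : Fin N, i ∈ Finset.Ico (s (j : ℕ)).1 (s ((j : ℕ) + 1)).1
      then f i (u ((s ((h.choose : Fin N) : ℕ)).2)) else 0,
      fun j => Finset.Ico (s (j : ℕ)).1 (s ((j : ℕ) + 1)).1, ?_, ?_⟩
    · intro j j' hjj' i hi i' hi'
      rw [Finset.mem_Ico] at hi hi'
      have hcast : (j : ℕ) < (j' : ℕ) := by exact_mod_cast hjj'
      have : (s ((j : ℕ) + 1)).1 ≤ (s (j' : ℕ)).1 :=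
        hnmono.monotone (show (j : ℕ) + 1 ≤ (j' : ℕ) by omega)
      omega
    · intro j
      refine Finset.sum_congr rfl fun i hi => ?_
      have h : ∃ j' : Fin N, i ∈ Finset.Ico (s (j' : ℕ)).1 (s ((j' : ℕ) + 1)).1 := ⟨j, hi⟩
      have hj : h.choose = j := by
        by_contra hne
        have hdisj : ∀ j₁ j₂ : Fin N, j₁ < j₂ →
            i ∈ Finset.Ico (s (j₁ : ℕ)).1 (s ((j₁ : ℕ) + 1)).1 →
            i ∈ Finset.Ico (s (j₂ : ℕ)).1 (s ((j₂ : ℕ) + 1)).1 → False := by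
          intro j₁ j₂ h12 h1 h2
          rw [Finset.mem_Ico] at h1 h2
          have hcast : (j₁ : ℕ) < (j₂ : ℕ) := by exact_mod_cast h12
          have : (s ((j₁ : ℕ) + 1)).1 ≤ (s (j₂ : ℕ)).1 :=
            hnmono.monotone (show (j₁ : ℕ) + 1 ≤ (j₂ : ℕ) by omega)
          omega
        rcases lt_or_gt_of_ne hne with hlt | hlt
        · exact hdisj _ _ hlt h.choose_spec hi
        · exact hdisj _ _ hlt hi h.choose_spec
      show f i (u ((s (j : ℕ)).2)) • e i = (if h : _ then _ else _) • e i
      rw [dif_pos h, hj]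
  · intro j
    have hsplit : ∑ i ∈ Finset.Ico (s (j : ℕ)).1 (s ((j : ℕ) + 1)).1,
        f i (u ((s (j : ℕ)).2)) • e i
        = P (s ((j : ℕ) + 1)).1 (u ((s (j : ℕ)).2)) - P (s (j : ℕ)).1 (u ((s (j : ℕ)).2)) := by
      rw [hPdef]
      exact Finset.sum_Ico_eq_sub _ (hnmono.monotone (Nat.le_succ _))
    show ‖∑ i ∈ Finset.Ico (s (j : ℕ)).1 (s ((j : ℕ) + 1)).1,
        f i (u ((s (j : ℕ)).2)) • e i - u ((s (j : ℕ)).2)‖ ≤ ε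
    rw [hsplit]
    have h1 := hclose (j : ℕ)
    have h2 := hsmall (j : ℕ)
    calc ‖P (s ((j : ℕ) + 1)).1 (u ((s (j : ℕ)).2)) - P (s (j : ℕ)).1 (u ((s (j : ℕ)).2))
          - u ((s (j : ℕ)).2)‖
        ≤ ‖P (s ((j : ℕ) + 1)).1 (u ((s (j : ℕ)).2)) - u ((s (j : ℕ)).2)‖
          + ‖P (s (j : ℕ)).1 (u ((s (j : ℕ)).2))‖ := by
          rw [sub_right_comm]
          exact norm_sub_le _ _
      _ ≤ ε := by linarith

end Selection

section Czero

open ZeroAtInfty BoundedContinuousFunction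

noncomputable def delta0 (k : ℕ) : C₀(ℕ, ℝ) :=
  ⟨⟨fun n => if n = k then 1 else 0, continuous_of_discreteTopology⟩, by
    rw [Filter.cocompact_eq_cofinite, Nat.cofinite_eq_atTop]
    refine (tendsto_congr' ?_).mpr tendsto_const_nhds
    filter_upwards [Filter.eventually_gt_atTop k] with n hn
    simp [Nat.ne_of_gt hn]⟩

@[simp] lemma delta0_apply (k n : ℕ) : delta0 k n = if n = k then 1 else 0 := rfl

lemma delta0_norm_ge (k : ℕ) : 1 ≤ ‖delta0 k‖ := by
  have := BoundedContinuousFunction.norm_coe_le_norm (delta0 k).toBCF k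
  simpa using this

lemma delta0_sum_norm_le {N : ℕ} (k : Fin N → ℕ) (hk : Function.Injective k)
    (ε : Fin N → ℝ) (hε : ∀ j, |ε j| ≤ 1) : ‖∑ j, ε j • delta0 (k j)‖ ≤ 1 := by
  rw [← ZeroAtInftyContinuousMap.norm_toBCF_eq_norm]
  refine BoundedContinuousFunction.norm_le (by norm_num) |>.mpr fun m => ?_
  have hco : (∑ j, ε j • delta0 (k j)).toBCF m = ∑ j, if m = k j then ε j else 0 := by
    have hpt : ∀ (M : Finset (Fin N)), ((∑ j ∈ M, ε j • delta0 (k j)) : C₀(ℕ,ℝ)) m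
        = ∑ j ∈ M, if m = k j then ε j else 0 := by
      intro M
      induction M using Finset.induction with
      | empty => simp [ZeroAtInftyContinuousMap.coe_zero]
      | @insert j0 M hnotmem ih =>
        rw [Finset.sum_insert hnotmem, Finset.sum_insert hnotmem,
          ZeroAtInftyContinuousMap.coe_add, Pi.add_apply, ih,
          ZeroAtInftyContinuousMap.coe_smul, Pi.smul_apply, delta0_apply]
        by_cases h : m = k j0 <;> simp [h]
    exact hpt Finset.univ
  rw [hco]
  by_cases h : ∃ j, k j = m
  · obtain ⟨j0, hj0⟩ := h
    have : ∑ j, (if m = k j then ε j else 0) = ε j0 := by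
      rw [Finset.sum_eq_single j0]
      · simp [hj0]
      · intro j _ hne
        have : m ≠ k j := fun hm => hne (hk (by rw [hj0, hm]))
        simp [this]
      · simp
    rw [this]
    calc ‖ε j0‖ = |ε j0| := rfl
      _ ≤ 1 := hε j0
  · have : ∑ j, (if m = k j then ε j else 0) = 0 := by
      refine Finset.sum_eq_zero fun j _ => ?_
      have : m ≠ k j := fun hm => h ⟨j, hm.symm⟩
      simp [this]
    simp [this]

lemma tendsto_functional_delta0 (φ : C₀(ℕ, ℝ) →L[ℝ] ℝ) :
    Filter.Tendsto (fun k => φ (delta0 k)) Filter.atTop (𝓝 0) := by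
  set g : ℕ → ℝ := fun k => φ (delta0 k) with hg
  set eps : ℕ → ℝ := fun k => if g k < 0 then (-1:ℝ) else 1 with heps
  have heps1 : ∀ k, |eps k| ≤ 1 := by
    intro k; by_cases h : g k < 0 <;> simp [heps, h]
  have habsg : ∀ k, |g k| = eps k * g k := by
    intro k
    by_cases h : g k < 0
    · simp [heps, h, abs_of_neg h]
    · simp [heps, h, abs_of_nonneg (not_lt.mp h)]
  have hsum : ∀ n, ∑ k ∈ Finset.range n, |g k| ≤ ‖φ‖ := by
    intro n
    have h1 : ∑ k ∈ Finset.range n, |g k| = φ (∑ j : Fin n, eps (j : ℕ) • delta0 (j : ℕ)) := by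
      rw [map_sum]
      rw [Finset.sum_range fun k => |g k|]
      refine Finset.sum_congr rfl fun j _ => ?_
      rw [habsg, map_smul]
      rfl
    rw [h1]
    calc φ (∑ j : Fin n, eps (j : ℕ) • delta0 (j : ℕ))
        ≤ |φ (∑ j : Fin n, eps (j : ℕ) • delta0 (j : ℕ))| := le_abs_self _
      _ ≤ ‖φ‖ * ‖∑ j : Fin n, eps (j : ℕ) • delta0 (j : ℕ)‖ := φ.le_opNorm _
      _ ≤ ‖φ‖ * 1 := by
          refine mul_le_mul_of_nonneg_left ?_ (norm_nonneg φ)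
          exact delta0_sum_norm_le (fun j : Fin n => (j : ℕ)) Fin.val_injective _
            (fun j => heps1 _)
      _ = ‖φ‖ := mul_one _
  have hsummable : Summable fun k => |g k| :=
    summable_of_sum_range_le (fun k => abs_nonneg _) hsum
  have := hsummable.tendsto_atTop_zero
  rw [tendsto_zero_iff_norm_tendsto_zero]
  simpa using this

end Czero

set_option maxHeartbeats 1000000

/-- if `X` is a Banach space with a normalized 1-unconditional basis
`(e i)` and there are `1 < p ≤ q < ∞` and `θ > 0` such that every normalized finite
block sequence of `(e i)` satisfies `θ‖·‖_q ≤ ‖∑‖ ≤ 2‖·‖_p`, then neither `c₀` nor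
`ℓ₁` embeds isomorphically into `X`. -/
theorem stmt_18 {X : Type*} [NormedAddCommGroup X] [NormedSpace ℝ X] [CompleteSpace X]
    (e : ℕ → X) (he : ∀ i, ‖e i‖ = 1)
    (hspan : Submodule.topologicalClosure (Submodule.span ℝ (Set.range e)) = ⊤)
    (huncond : ∀ (s : Finset ℕ) (lam eps : ℕ → ℝ), (∀ i, |eps i| ≤ 1) →
      ‖∑ i ∈ s, (eps i * lam i) • e i‖ ≤ ‖∑ i ∈ s, lam i • e i‖)
    (p q θ : ℝ) (hp : 1 < p) (hpq : p ≤ q) (hθ : 0 < θ)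
    (hblock : ∀ (N : ℕ) (y : Fin N → X), IsBlockSeq e y → (∀ j, ‖y j‖ = 1) →
      ∀ lam : Fin N → ℝ,
        θ * (∑ j, |lam j| ^ q) ^ (1 / q) ≤ ‖∑ j, lam j • y j‖ ∧
        ‖∑ j, lam j • y j‖ ≤ 2 * (∑ j, |lam j| ^ p) ^ (1 / p)) :
    (¬ ∃ (T : C₀(ℕ, ℝ) →L[ℝ] X) (c : ℝ), 0 < c ∧ ∀ v, c * ‖v‖ ≤ ‖T v‖) ∧
    (¬ ∃ (T : lp (fun _ : ℕ => ℝ) 1 →L[ℝ] X) (c : ℝ), 0 < c ∧ ∀ v, c * ‖v‖ ≤ ‖T v‖) := by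
  obtain ⟨f, hA, hP, hconv⟩ := exists_coords e he hspan huncond
  have hq0 : (0:ℝ) < q := lt_of_lt_of_le (lt_trans zero_lt_one hp) hpq
  have hp0 : (0:ℝ) < p := lt_trans zero_lt_one hp
  constructor
  · rintro ⟨T, c, hc0, hc⟩
    set u : ℕ → X := fun k => T (delta0 k) with hu
    have hcu : ∀ k, c ≤ ‖u k‖ := by
      intro k
      calc c = c * 1 := (mul_one c).symm
        _ ≤ c * ‖delta0 k‖ := by
            exact mul_le_mul_of_nonneg_left (delta0_norm_ge k) hc0.le
        _ ≤ ‖T (delta0 k)‖ := hc _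
    have hcoord : ∀ i, Filter.Tendsto (fun k => f i (u k)) Filter.atTop (𝓝 0) := by
      intro i
      have := tendsto_functional_delta0 ((f i).comp T)
      simpa using this
    -- choose N large
    obtain ⟨N, hN1, hNbig⟩ : ∃ N : ℕ, 1 ≤ N ∧ ‖T‖ + 1 < θ * (c/2) * (N:ℝ) ^ (1/q) := by
      have h1 : Filter.Tendsto (fun x : ℝ => θ * (c/2) * x ^ (1/q)) Filter.atTop Filter.atTop :=
        (tendsto_rpow_atTop (by positivity)).const_mul_atTop (by positivity)
      have h2 : Filter.Tendsto (fun N : ℕ => θ * (c/2) * (N:ℝ) ^ (1/q))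
          Filter.atTop Filter.atTop := h1.comp tendsto_natCast_atTop_atTop
      obtain ⟨N, hN⟩ := ((h2.eventually_gt_atTop (‖T‖ + 1)).and
        (Filter.eventually_ge_atTop 1)).exists
      exact ⟨N, hN.2, hN.1⟩
    set ε : ℝ := min (c/2) (1/(N+1)) with hεdef
    have hε : 0 < ε := lt_min (by positivity) (by positivity)
    obtain ⟨k, w, hkmono, hwblock, hwclose⟩ := exists_block_approx e f hconv u hcoord N ε hε
    have hkinj : Function.Injective k := by
      intro a b hab
      rcases lt_trichotomy a b with h | h | h
      · exact absurd hab (Nat.ne_of_lt (hkmono a b h))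
      · exact h
      · exact absurd hab.symm (Nat.ne_of_lt (hkmono b a h))
    have hwlow : ∀ j, c/2 ≤ ‖w j‖ := by
      intro j
      have h1 := hwclose j
      have h2 := hcu (k j)
      have h3 : ‖u (k j)‖ - ‖w j‖ ≤ ‖w j - u (k j)‖ := by
        have := norm_sub_norm_le (w j - u (k j) + u (k j)) (u (k j))
        simpa using (norm_sub_norm_le (u (k j)) (w j)).trans_eq (norm_sub_rev _ _)
      have hεc : ε ≤ c/2 := min_le_left _ _
      linarith
    have hwpos : ∀ j, (0:ℝ) < ‖w j‖ := fun j => lt_of_lt_of_le (by positivity) (hwlow j)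
    set z : Fin N → X := fun j => ‖w j‖⁻¹ • w j with hz
    have hzblock : IsBlockSeq e z := hwblock.smul _
    have hznorm : ∀ j, ‖z j‖ = 1 := by
      intro j
      rw [hz]
      simp only [norm_smul, norm_inv, norm_norm]
      exact inv_mul_cancel₀ (hwpos j).ne'
    have hsum_eq : ∑ j, ‖w j‖ • z j = ∑ j, w j := by
      refine Finset.sum_congr rfl fun j _ => ?_
      rw [hz]
      rw [smul_smul, mul_inv_cancel₀ (hwpos j).ne', one_smul]
    have hlow := (hblock N z hzblock hznorm (fun j => ‖w j‖)).1
    rw [hsum_eq] at hlow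
    -- lower bound on the lhs
    have hsumq : (N:ℝ) * (c/2)^q ≤ ∑ j : Fin N, |‖w j‖| ^ q := by
      calc (N:ℝ) * (c/2)^q = ∑ _j : Fin N, (c/2)^q := by
            rw [Finset.sum_const, Finset.card_univ, Fintype.card_fin, nsmul_eq_mul]
        _ ≤ ∑ j : Fin N, |‖w j‖| ^ q := by
            refine Finset.sum_le_sum fun j _ => ?_
            rw [abs_of_nonneg (norm_nonneg _)]
            exact Real.rpow_le_rpow (by positivity) (hwlow j) hq0.le
    have hrpow_eq : ((N:ℝ) * (c/2)^q) ^ (1/q) = (N:ℝ)^(1/q) * (c/2) := by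
      rw [Real.mul_rpow (by positivity) (by positivity)]
      congr 1
      rw [← Real.rpow_mul (by positivity : (0:ℝ) ≤ c/2), mul_one_div_cancel hq0.ne',
        Real.rpow_one]
    have hlhs : θ * (c/2) * (N:ℝ)^(1/q) ≤ ‖∑ j, w j‖ := by
      calc θ * (c/2) * (N:ℝ)^(1/q) = θ * (((N:ℝ) * (c/2)^q) ^ (1/q)) := by
            rw [hrpow_eq]; ring
        _ ≤ θ * (∑ j : Fin N, |‖w j‖| ^ q) ^ (1/q) := by
            refine mul_le_mul_of_nonneg_left ?_ hθ.le
            exact Real.rpow_le_rpow (by positivity) hsumq (by positivity)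
        _ ≤ ‖∑ j, w j‖ := hlow
    -- upper bound
    have hupper : ‖∑ j, w j‖ ≤ ‖T‖ + 1 := by
      have hdiff : ‖∑ j, w j - ∑ j, u (k j)‖ ≤ (N:ℝ) * ε := by
        rw [← Finset.sum_sub_distrib]
        calc ‖∑ j, (w j - u (k j))‖ ≤ ∑ j : Fin N, ‖w j - u (k j)‖ := norm_sum_le _ _
          _ ≤ ∑ _j : Fin N, ε := Finset.sum_le_sum fun j _ => hwclose j
          _ = (N:ℝ) * ε := by
              rw [Finset.sum_const, Finset.card_univ, Fintype.card_fin, nsmul_eq_mul]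
      have hNε : (N:ℝ) * ε ≤ 1 := by
        have h1 : ε ≤ 1/(N+1) := min_le_right _ _
        have h2 : (N:ℝ) * ε ≤ (N:ℝ) * (1/(N+1)) :=
          mul_le_mul_of_nonneg_left h1 (Nat.cast_nonneg N)
        have h3 : (N:ℝ) * (1/(N+1)) ≤ 1 := by
          rw [mul_one_div, div_le_one (by positivity)]
          linarith [Nat.cast_nonneg (α := ℝ) N]
        linarith
      have hTu : ‖∑ j, u (k j)‖ ≤ ‖T‖ := by
        have hmapsum : ∑ j, u (k j) = T (∑ j, delta0 (k j)) := by
          rw [map_sum]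
        rw [hmapsum]
        calc ‖T (∑ j, delta0 (k j))‖ ≤ ‖T‖ * ‖∑ j, delta0 (k j)‖ := T.le_opNorm _
          _ ≤ ‖T‖ * 1 := by
              refine mul_le_mul_of_nonneg_left ?_ (norm_nonneg T)
              have := delta0_sum_norm_le k hkinj (fun _ => 1) (fun j => by norm_num)
              simpa using this
          _ = ‖T‖ := mul_one _
      calc ‖∑ j, w j‖ ≤ ‖∑ j, u (k j)‖ + ‖∑ j, w j - ∑ j, u (k j)‖ := by
            have := norm_add_le (∑ j, u (k j)) (∑ j, w j - ∑ j, u (k j))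
            simpa using this
        _ ≤ ‖T‖ + 1 := add_le_add hTu (hdiff.trans hNε)
    linarith
  · rintro ⟨T, c, hc0, hc⟩
    classical
    set δ : ℕ → lp (fun _ : ℕ => ℝ) 1 := fun k => lp.single 1 k (1:ℝ) with hδ
    have htoReal : (0:ℝ) < (1:ℝ≥0∞).toReal := by norm_num
    have hδnorm : ∀ k, ‖δ k‖ = 1 := by
      intro k
      have := lp.norm_single (E := fun _ : ℕ => ℝ) (p := 1) one_pos k (1:ℝ)
      exact this.trans norm_one
    have hδapply : ∀ k i : ℕ, δ k i = if i = k then 1 else 0 := by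
      intro k i
      by_cases h : i = k
      · subst h; simp [hδ, lp.single_apply_self]
      · simp [hδ, lp.single_apply_ne _ _ _ h, h]
    -- pointwise-convergent subsequence of coordinates
    set G : ℕ → (ℕ → ℝ) := fun k i => f i (T (δ k)) with hG
    have hGmem : ∀ k, G k ∈ Set.pi Set.univ (fun _ : ℕ => Set.Icc (-‖T‖) ‖T‖) := by
      intro k i _
      have h1 : |f i (T (δ k))| ≤ ‖T (δ k)‖ := hA i _
      have h2 : ‖T (δ k)‖ ≤ ‖T‖ := by
        calc ‖T (δ k)‖ ≤ ‖T‖ * ‖δ k‖ := T.le_opNorm _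
          _ = ‖T‖ := by rw [hδnorm k, mul_one]
      have := abs_le.mp (h1.trans h2)
      exact ⟨this.1, this.2⟩
    have hcpt : IsCompact (Set.pi Set.univ fun _ : ℕ => Set.Icc (-‖T‖) ‖T‖) :=
      isCompact_univ_pi fun _ => isCompact_Icc
    obtain ⟨a, -, ψ, hψmono, hψconv⟩ := hcpt.tendsto_subseq hGmem
    have hGconv : ∀ i, Filter.Tendsto (fun m => G (ψ m) i) Filter.atTop (𝓝 (a i)) :=
      fun i => tendsto_pi_nhds.mp hψconv i
    set u : ℕ → X := fun m => T (δ (ψ (2*m+1)) - δ (ψ (2*m))) with hu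
    have hodd : Filter.Tendsto (fun m => 2*m+1) Filter.atTop Filter.atTop :=
      Filter.tendsto_atTop_mono (fun m => by simp only [id_eq]; omega) Filter.tendsto_id
    have heven : Filter.Tendsto (fun m => 2*m) Filter.atTop Filter.atTop :=
      Filter.tendsto_atTop_mono (fun m => by simp only [id_eq]; omega) Filter.tendsto_id
    have hcoord : ∀ i, Filter.Tendsto (fun m => f i (u m)) Filter.atTop (𝓝 0) := by
      intro i
      have heq : ∀ m, f i (u m) = G (ψ (2*m+1)) i - G (ψ (2*m)) i := by
        intro m
        rw [hu]
        simp only [map_sub]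
        rfl
      rw [show (fun m => f i (u m)) = fun m => G (ψ (2*m+1)) i - G (ψ (2*m)) i
        from funext heq]
      have h1 : Filter.Tendsto (fun m => G (ψ (2*m+1)) i) Filter.atTop (𝓝 (a i)) :=
        (hGconv i).comp hodd
      have h2 : Filter.Tendsto (fun m => G (ψ (2*m)) i) Filter.atTop (𝓝 (a i)) :=
        (hGconv i).comp heven
      simpa using h1.sub h2
    have hψinj : Function.Injective ψ := hψmono.injective
    have hδdiff_low : ∀ m, (1:ℝ) ≤ ‖δ (ψ (2*m+1)) - δ (ψ (2*m))‖ := by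
      intro m
      have hne : ψ (2*m) ≠ ψ (2*m+1) := fun h => by
        have := hψinj h; omega
      have happ : (δ (ψ (2*m+1)) - δ (ψ (2*m))) (ψ (2*m+1)) = 1 := by
        rw [lp.coeFn_sub, Pi.sub_apply, hδapply, hδapply, if_pos rfl, if_neg hne.symm, sub_zero]
      have := lp.norm_apply_le_norm one_ne_zero (δ (ψ (2*m+1)) - δ (ψ (2*m))) (ψ (2*m+1))
      rw [happ] at this
      simpa using this
    have hδdiff_up : ∀ m, ‖δ (ψ (2*m+1)) - δ (ψ (2*m))‖ ≤ 2 := by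
      intro m
      calc ‖δ (ψ (2*m+1)) - δ (ψ (2*m))‖ ≤ ‖δ (ψ (2*m+1))‖ + ‖δ (ψ (2*m))‖ := norm_sub_le _ _
        _ = 2 := by rw [hδnorm, hδnorm]; norm_num
    have hcu : ∀ m, c ≤ ‖u m‖ := by
      intro m
      calc c = c * 1 := (mul_one c).symm
        _ ≤ c * ‖δ (ψ (2*m+1)) - δ (ψ (2*m))‖ :=
            mul_le_mul_of_nonneg_left (hδdiff_low m) hc0.le
        _ ≤ ‖u m‖ := hc _
    have huup : ∀ m, ‖u m‖ ≤ 2 * ‖T‖ := by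
      intro m
      calc ‖u m‖ ≤ ‖T‖ * ‖δ (ψ (2*m+1)) - δ (ψ (2*m))‖ := T.le_opNorm _
        _ ≤ ‖T‖ * 2 := mul_le_mul_of_nonneg_left (hδdiff_up m) (norm_nonneg T)
        _ = 2 * ‖T‖ := mul_comm _ _
    set C : ℝ := 2 * ‖T‖ + 1 with hC
    have hC1 : (1:ℝ) ≤ C := by have := norm_nonneg T; rw [hC]; linarith
    have hC0 : (0:ℝ) < C := lt_of_lt_of_le zero_lt_one hC1
    -- choose N large
    have hexp : (0:ℝ) < 1 - 1/p := by
      have : 1/p < 1 := by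
        rw [div_lt_one hp0]; exact hp
      linarith
    obtain ⟨N, hN1, hNbig⟩ : ∃ N : ℕ, 1 ≤ N ∧ (2*C+2)/(2*c) < (N:ℝ) ^ (1 - 1/p) := by
      have h1 : Filter.Tendsto (fun x : ℝ => x ^ (1 - 1/p)) Filter.atTop Filter.atTop :=
        tendsto_rpow_atTop hexp
      have h2 : Filter.Tendsto (fun N : ℕ => (N:ℝ) ^ (1 - 1/p)) Filter.atTop Filter.atTop :=
        h1.comp tendsto_natCast_atTop_atTop
      obtain ⟨N, hN⟩ := ((h2.eventually_gt_atTop ((2*C+2)/(2*c))).and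
        (Filter.eventually_ge_atTop 1)).exists
      exact ⟨N, hN.2, hN.1⟩
    set ε : ℝ := min (c/2) (1/(N+1)) with hεdef
    have hε : 0 < ε := lt_min (by positivity) (by positivity)
    have hε1 : ε ≤ 1 := by
      refine (min_le_right _ _).trans ?_
      rw [div_le_one (by positivity)]
      linarith [Nat.cast_nonneg (α := ℝ) N]
    obtain ⟨k, w, hkmono, hwblock, hwclose⟩ := exists_block_approx e f hconv u hcoord N ε hε
    have hwlow : ∀ j, c/2 ≤ ‖w j‖ := by
      intro j
      have h1 := hwclose j
      have h2 := hcu (k j)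
      have h3 : ‖u (k j)‖ - ‖w j‖ ≤ ‖w j - u (k j)‖ :=
        (norm_sub_norm_le (u (k j)) (w j)).trans_eq (norm_sub_rev _ _)
      have hεc : ε ≤ c/2 := min_le_left _ _
      linarith
    have hwpos : ∀ j, (0:ℝ) < ‖w j‖ := fun j => lt_of_lt_of_le (by positivity) (hwlow j)
    have hwup : ∀ j, ‖w j‖ ≤ C := by
      intro j
      have h1 := hwclose j
      have h2 := huup (k j)
      have h3 : ‖w j‖ - ‖u (k j)‖ ≤ ‖w j - u (k j)‖ := norm_sub_norm_le _ _
      rw [hC]; linarith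
    set z : Fin N → X := fun j => ‖w j‖⁻¹ • w j with hz
    have hzblock : IsBlockSeq e z := hwblock.smul _
    have hznorm : ∀ j, ‖z j‖ = 1 := by
      intro j
      rw [hz]
      simp only [norm_smul, norm_inv, norm_norm]
      exact inv_mul_cancel₀ (hwpos j).ne'
    have hsum_eq : ∑ j, ‖w j‖ • z j = ∑ j, w j := by
      refine Finset.sum_congr rfl fun j _ => ?_
      rw [hz, smul_smul, mul_inv_cancel₀ (hwpos j).ne', one_smul]
    have hup := (hblock N z hzblock hznorm (fun j => ‖w j‖)).2
    rw [hsum_eq] at hup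
    -- upper estimate : ‖∑ w‖ ≤ 2 C N^{1/p}
    have hsump : ∑ j : Fin N, |‖w j‖| ^ p ≤ (N:ℝ) * C ^ p := by
      calc ∑ j : Fin N, |‖w j‖| ^ p ≤ ∑ _j : Fin N, C ^ p := by
            refine Finset.sum_le_sum fun j _ => ?_
            rw [abs_of_nonneg (norm_nonneg _)]
            exact Real.rpow_le_rpow (norm_nonneg _) (hwup j) hp0.le
        _ = (N:ℝ) * C ^ p := by
            rw [Finset.sum_const, Finset.card_univ, Fintype.card_fin, nsmul_eq_mul]
    have hrpow_eq : ((N:ℝ) * C^p) ^ (1/p) = (N:ℝ)^(1/p) * C := by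
      rw [Real.mul_rpow (by positivity) (by positivity)]
      congr 1
      rw [← Real.rpow_mul hC0.le, mul_one_div_cancel hp0.ne', Real.rpow_one]
    have hupper : ‖∑ j, w j‖ ≤ 2 * C * (N:ℝ)^(1/p) := by
      calc ‖∑ j, w j‖ ≤ 2 * (∑ j : Fin N, |‖w j‖| ^ p) ^ (1/p) := hup
        _ ≤ 2 * (((N:ℝ) * C^p) ^ (1/p)) := by
            refine mul_le_mul_of_nonneg_left ?_ (by norm_num)
            exact Real.rpow_le_rpow (by positivity) hsump (by positivity)
        _ = 2 * C * (N:ℝ)^(1/p) := by rw [hrpow_eq]; ring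
    -- lower estimate : ‖∑ w‖ ≥ 2 c N - 1
    set r : Fin N → ℕ := fun j => ψ (2 * (k j) + 1) with hr
    set t : Fin N → ℕ := fun j => ψ (2 * (k j)) with ht
    have hkinj : Function.Injective k := by
      intro a' b' hab
      rcases lt_trichotomy a' b' with h | h | h
      · exact absurd hab (Nat.ne_of_lt (hkmono a' b' h))
      · exact h
      · exact absurd hab.symm (Nat.ne_of_lt (hkmono b' a' h))
    have hrinj : Function.Injective r := by
      intro a' b' hab
      exact hkinj (by have := hψinj hab; omega)
    have htinj : Function.Injective t := by
      intro a' b' hab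
      exact hkinj (by have := hψinj hab; omega)
    have hrt : ∀ j j' : Fin N, r j ≠ t j' := by
      intro j j' h
      have := hψinj h
      omega
    set v : lp (fun _ : ℕ => ℝ) 1 := ∑ j : Fin N, (δ (r j) - δ (t j)) with hv
    have hTv : ∑ j, u (k j) = T v := by
      rw [hv, map_sum]
    have hvlow : (2*N : ℝ) ≤ ‖v‖ := by
      set S : Finset ℕ := Finset.image r Finset.univ ∪ Finset.image t Finset.univ with hS
      have hvapp : ∀ i ∈ S, ‖v i‖ = 1 := by
        intro i hi
        have hcoe : v i = ∑ j : Fin N, ((δ (r j)) i - (δ (t j)) i) := by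
          rw [hv, lp.coeFn_sum, Finset.sum_apply]
          refine Finset.sum_congr rfl fun j _ => ?_
          rw [lp.coeFn_sub, Pi.sub_apply]
        rcases Finset.mem_union.mp hi with hmem | hmem
        · obtain ⟨j0, -, rfl⟩ := Finset.mem_image.mp hmem
          have : v (r j0) = 1 := by
            rw [hcoe, Finset.sum_eq_single j0]
            · rw [hδapply, hδapply, if_pos rfl, if_neg (hrt j0 j0), sub_zero]
            · intro j _ hne
              rw [hδapply, hδapply, if_neg (fun h : r j0 = r j => hne (hrinj h.symm)),
                if_neg (fun h : r j0 = t j => hrt j0 j h), sub_zero]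
            · simp
          rw [this]; norm_num
        · obtain ⟨j0, -, rfl⟩ := Finset.mem_image.mp hmem
          have : v (t j0) = -1 := by
            rw [hcoe, Finset.sum_eq_single j0]
            · rw [hδapply, hδapply, if_neg (fun h : t j0 = r j0 => hrt j0 j0 h.symm),
                if_pos rfl, zero_sub]
            · intro j _ hne
              rw [hδapply, hδapply, if_neg (fun h : t j0 = r j => hrt j j0 h.symm),
                if_neg (fun h : t j0 = t j => hne (htinj h.symm)), sub_zero]
            · simp
          rw [this]; norm_num
      have hcard : S.card = 2 * N := by
        rw [hS, Finset.card_union_of_disjoint, Finset.card_image_of_injective _ hrinj,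
          Finset.card_image_of_injective _ htinj, Finset.card_univ, Fintype.card_fin]
        · ring
        · rw [Finset.disjoint_left]
          rintro i hi1 hi2
          obtain ⟨j1, -, rfl⟩ := Finset.mem_image.mp hi1
          obtain ⟨j2, -, h⟩ := Finset.mem_image.mp hi2
          exact hrt j1 j2 h.symm
      have hsumS := lp.sum_rpow_le_norm_rpow htoReal v S
      have h1 : ∑ i ∈ S, ‖v i‖ ^ (1:ℝ≥0∞).toReal = (2*N : ℝ) := by
        have : ∀ i ∈ S, ‖v i‖ ^ (1:ℝ≥0∞).toReal = 1 := by
          intro i hi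
          rw [hvapp i hi, Real.one_rpow]
        rw [Finset.sum_congr rfl this, Finset.sum_const, hcard, nsmul_eq_mul]
        push_cast; ring
      have h2 : ‖v‖ ^ (1:ℝ≥0∞).toReal = ‖v‖ := by
        rw [ENNReal.toReal_one, Real.rpow_one]
      rw [h1, h2] at hsumS
      exact hsumS
    have hdiff : ‖∑ j, w j - ∑ j, u (k j)‖ ≤ (N:ℝ) * ε := by
      rw [← Finset.sum_sub_distrib]
      calc ‖∑ j, (w j - u (k j))‖ ≤ ∑ j : Fin N, ‖w j - u (k j)‖ := norm_sum_le _ _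
        _ ≤ ∑ _j : Fin N, ε := Finset.sum_le_sum fun j _ => hwclose j
        _ = (N:ℝ) * ε := by
            rw [Finset.sum_const, Finset.card_univ, Fintype.card_fin, nsmul_eq_mul]
    have hNε : (N:ℝ) * ε ≤ 1 := by
      have h1 : ε ≤ 1/(N+1) := min_le_right _ _
      have h2 : (N:ℝ) * ε ≤ (N:ℝ) * (1/(N+1)) :=
        mul_le_mul_of_nonneg_left h1 (Nat.cast_nonneg N)
      have h3 : (N:ℝ) * (1/(N+1)) ≤ 1 := by
        rw [mul_one_div, div_le_one (by positivity)]
        linarith [Nat.cast_nonneg (α := ℝ) N]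
      linarith
    have hlower : 2*c*(N:ℝ) - 1 ≤ ‖∑ j, w j‖ := by
      have hTvlow : c * (2*N : ℝ) ≤ ‖T v‖ := by
        calc c * (2*N:ℝ) ≤ c * ‖v‖ := mul_le_mul_of_nonneg_left hvlow hc0.le
          _ ≤ ‖T v‖ := hc v
      have h4 : ‖∑ j, u (k j)‖ - ‖∑ j, w j‖ ≤ ‖∑ j, w j - ∑ j, u (k j)‖ :=
        (norm_sub_norm_le (∑ j, u (k j)) (∑ j, w j)).trans_eq (norm_sub_rev _ _)
      rw [← hTv] at hTvlow
      have h6 := hdiff.trans hNε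
      have hcN : c * (2*(N:ℝ)) = 2*c*(N:ℝ) := by ring
      linarith
    -- final contradiction
    have hN0 : (0:ℝ) < (N:ℝ) := Nat.cast_pos.mpr (lt_of_lt_of_le Nat.zero_lt_one hN1)
    have hNsplit : (N:ℝ) = (N:ℝ)^(1/p) * (N:ℝ)^(1-1/p) := by
      have hexp1 : 1/p + (1-1/p) = 1 := by ring
      rw [← Real.rpow_add hN0, hexp1, Real.rpow_one]
    have hN1p : (1:ℝ) ≤ (N:ℝ)^(1/p) := by
      have : (1:ℝ) ≤ (N:ℝ) := by exact_mod_cast hN1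
      calc (1:ℝ) = (1:ℝ)^(1/p) := (Real.one_rpow _).symm
        _ ≤ (N:ℝ)^(1/p) := Real.rpow_le_rpow zero_le_one this (by positivity)
    have hkey2 : (2*C+2) * (N:ℝ)^(1/p) < 2*c*(N:ℝ) := by
      have h5 : (2*C+2) < 2*c*(N:ℝ)^(1-1/p) := by
        rw [div_lt_iff₀ (by positivity)] at hNbig
        linarith [hNbig]
      calc (2*C+2) * (N:ℝ)^(1/p) < (2*c*(N:ℝ)^(1-1/p)) * (N:ℝ)^(1/p) := by
            refine mul_lt_mul_of_pos_right h5 (by positivity)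
        _ = 2*c*(N:ℝ) := by
            conv_rhs => rw [hNsplit]
            ring
      -- note: uses hNsplit
    have hfinal : 2*C*(N:ℝ)^(1/p) < 2*c*(N:ℝ) - 1 := by
      nlinarith [hN1p]
    linarith
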